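/- For 0 < p < 1 and t ≥ 0, the binomial tail satisfies Σ_{i ≥ (p+t)n} C(n,i) p^i (1-p)^{n-i} ≤ e^{-2t²n}. -/

import Mathlib

open Real Finset

/-- Hoeffding's lemma for a Bernoulli variable. -/
lemma bernoulli_mgf_bound {p q : ℝ} (hp : 0 < p) (hq : 0 < q) (hpq : p + q = 1)
    (L : ℝ) : p * Real.exp L + q ≤ Real.exp (p * L + L ^ 2 / 8) := by
  have hpos : ∀ x : ℝ, 0 < p * Real.exp x + q := fun x =>
    add_pos (mul_pos hp (Real.exp_pos x)) hq
  set g : ℝ → ℝ := fun x => p * x + x ^ 2 / 8 - Real.log (p * Real.exp x + q) with hg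
  set g' : ℝ → ℝ := fun x => p + 2 * x / 8 - p * Real.exp x / (p * Real.exp x + q) with hg'
  have hh : ∀ x : ℝ, HasDerivAt (fun y => p * Real.exp y + q) (p * Real.exp x) x := fun x =>
    ((Real.hasDerivAt_exp x).const_mul p).add_const q
  have hgd : ∀ x : ℝ, HasDerivAt g (g' x) x := by
    intro x
    have h1 : HasDerivAt (fun y : ℝ => p * y) (p * 1) x := (hasDerivAt_id x).const_mul p
    have h2 : HasDerivAt (fun y : ℝ => y ^ 2 / 8) ((2 : ℕ) * x ^ 1 / 8) x :=
      (hasDerivAt_pow 2 x).div_const 8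
    have h3 : HasDerivAt (fun y => Real.log (p * Real.exp y + q))
        ((p * Real.exp x) / (p * Real.exp x + q)) x := (hh x).log (hpos x).ne'
    have := ((h1.add h2).sub h3)
    convert this using 1
    · rfl
    · rfl
    · rfl
    · simp [hg']
  have hg'd : ∀ x : ℝ, HasDerivAt g'
      (1 / 4 - p * q * Real.exp x / (p * Real.exp x + q) ^ 2) x := by
    intro x
    have h1 : HasDerivAt (fun y : ℝ => p + 2 * y / 8) (2 * 1 / 8) x := by
      simpa using (((hasDerivAt_id x).const_mul 2).div_const 8).const_add p
    have h2 : HasDerivAt (fun y => p * Real.exp y / (p * Real.exp y + q))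
        ((p * Real.exp x * (p * Real.exp x + q) - p * Real.exp x * (p * Real.exp x)) /
          (p * Real.exp x + q) ^ 2) x :=
      ((Real.hasDerivAt_exp x).const_mul p).div (hh x) (hpos x).ne'
    have := h1.sub h2
    convert this using 1
    · rfl
    · rfl
    · rfl
    · field_simp
      ring
  -- second derivative nonneg
  have hsec : ∀ x : ℝ, 0 ≤ 1 / 4 - p * q * Real.exp x / (p * Real.exp x + q) ^ 2 := by
    intro x
    rw [sub_nonneg, div_le_iff₀ (pow_pos (hpos x) 2)]
    nlinarith [sq_nonneg (p * Real.exp x - q), Real.exp_pos x]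
  have hmono' : Monotone g' := monotone_of_hasDerivAt_nonneg hg'd hsec
  have hg'0 : g' 0 = 0 := by
    simp only [hg', Real.exp_zero, mul_one, mul_zero]
    field_simp [hpq]
    linear_combination (8 * p) * hpq
  have hg'nonneg : ∀ x ∈ interior (Set.Ici (0 : ℝ)), 0 ≤ g' x := by
    intro x hx
    rw [interior_Ici] at hx
    rw [← hg'0]
    exact hmono' (le_of_lt hx)
  have hmono : MonotoneOn g (Set.Ici 0) :=
    monotoneOn_of_hasDerivWithinAt_nonneg (convex_Ici 0)
      (fun x _ => (hgd x).continuousAt.continuousWithinAt)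
      (fun x _ => (hgd x).hasDerivWithinAt) hg'nonneg
  have hg0 : g 0 = 0 := by simp [hg, hpq]
  -- conclude for arbitrary L: for L ≥ 0 use monotonicity; for L < 0 symmetrize?
  rcases le_or_gt 0 L with hL | hL
  · have : 0 ≤ g L := by
      rw [← hg0]; exact hmono Set.self_mem_Ici hL hL
    have hlog : Real.log (p * Real.exp L + q) ≤ p * L + L ^ 2 / 8 := by
      simp only [hg] at this; linarith
    calc p * Real.exp L + q = Real.exp (Real.log (p * Real.exp L + q)) :=
          (Real.exp_log (hpos L)).symm
      _ ≤ Real.exp (p * L + L ^ 2 / 8) := Real.exp_le_exp.mpr hlog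
  · -- for L < 0 use symmetry: apply the Ici-case to q, p with -L
    -- we prove it directly via an antitone argument
    have hanti : AntitoneOn g (Set.Iic 0) := by
      have : ∀ x ∈ interior (Set.Iic (0 : ℝ)), g' x ≤ 0 := by
        intro x hx
        rw [interior_Iic] at hx
        rw [← hg'0]
        exact hmono' (le_of_lt hx)
      exact antitoneOn_of_hasDerivWithinAt_nonpos (convex_Iic 0)
        (fun x _ => (hgd x).continuousAt.continuousWithinAt)
        (fun x _ => (hgd x).hasDerivWithinAt) this
    have : 0 ≤ g L := by
      rw [← hg0]; exact hanti (le_of_lt hL) Set.self_mem_Iic (le_of_lt hL)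
    have hlog : Real.log (p * Real.exp L + q) ≤ p * L + L ^ 2 / 8 := by
      simp only [hg] at this; linarith
    calc p * Real.exp L + q = Real.exp (Real.log (p * Real.exp L + q)) :=
          (Real.exp_log (hpos L)).symm
      _ ≤ Real.exp (p * L + L ^ 2 / 8) := Real.exp_le_exp.mpr hlog

/-- Hoeffding/Chernoff bound for the upper tail of a Binomial(n,p) distribution. -/
theorem stmt_2 (n : ℕ) (p t : ℝ) (hp0 : 0 < p) (hp1 : p < 1) (ht : 0 ≤ t) :
    ∑ i ∈ (Finset.range (n + 1)).filter (fun i : ℕ => (p + t) * (n : ℝ) ≤ (i : ℝ)),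
        (n.choose i : ℝ) * p ^ i * (1 - p) ^ (n - i) ≤ Real.exp (-2 * t ^ 2 * n) := by
  set q : ℝ := 1 - p with hq
  have hq0 : 0 < q := by simp [hq]; linarith
  set L : ℝ := 4 * t with hLdef
  have hL : 0 ≤ L := by positivity
  have hterm : ∀ i : ℕ, 0 ≤ (n.choose i : ℝ) * p ^ i * q ^ (n - i) := fun i => by positivity
  -- Step 1: each term in the filtered sum is ≤ exp(L*(i - (p+t)*n)) * term
  have step1 : ∑ i ∈ (Finset.range (n + 1)).filter (fun i : ℕ => (p + t) * (n : ℝ) ≤ (i : ℝ)),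
      (n.choose i : ℝ) * p ^ i * q ^ (n - i)
      ≤ ∑ i ∈ Finset.range (n + 1),
        Real.exp (L * (i : ℝ) - L * ((p + t) * n)) * ((n.choose i : ℝ) * p ^ i * q ^ (n - i)) := by
    refine le_trans (Finset.sum_le_sum ?_) (Finset.sum_le_sum_of_subset_of_nonneg
      (Finset.filter_subset _ _) (fun i _ _ => by positivity))
    intro i hi
    rw [Finset.mem_filter] at hi
    have h1 : (1 : ℝ) ≤ Real.exp (L * (i : ℝ) - L * ((p + t) * n)) := by
      rw [← Real.exp_zero]
      apply Real.exp_le_exp.mpr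
      have : L * ((p + t) * n) ≤ L * i := mul_le_mul_of_nonneg_left hi.2 hL
      linarith
    nlinarith [hterm i]
  -- Step 2: rewrite the sum as MGF
  have step2 : ∑ i ∈ Finset.range (n + 1),
      Real.exp (L * (i : ℝ) - L * ((p + t) * n)) * ((n.choose i : ℝ) * p ^ i * q ^ (n - i))
      = Real.exp (- (L * ((p + t) * n))) * (p * Real.exp L + q) ^ n := by
    rw [add_pow, Finset.mul_sum]
    refine Finset.sum_congr rfl fun i hi => ?_
    rw [Real.exp_sub, mul_pow, ← Real.exp_nat_mul]
    rw [Real.exp_neg]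
    field_simp
  -- Step 3: bound the MGF
  have step3 : (p * Real.exp L + q) ^ n ≤ Real.exp ((p * L + L ^ 2 / 8) * n) := by
    calc (p * Real.exp L + q) ^ n ≤ (Real.exp (p * L + L ^ 2 / 8)) ^ n := by
          apply pow_le_pow_left₀ (by positivity)
          exact bernoulli_mgf_bound hp0 hq0 (by ring) L
      _ = Real.exp ((p * L + L ^ 2 / 8) * n) := by
          rw [← Real.exp_nat_mul]; ring_nf
  calc ∑ i ∈ (Finset.range (n + 1)).filter (fun i : ℕ => (p + t) * (n : ℝ) ≤ (i : ℝ)),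
        (n.choose i : ℝ) * p ^ i * (1 - p) ^ (n - i)
      ≤ Real.exp (- (L * ((p + t) * n))) * (p * Real.exp L + q) ^ n := step1.trans step2.le
    _ ≤ Real.exp (- (L * ((p + t) * n))) * Real.exp ((p * L + L ^ 2 / 8) * n) := by
        exact mul_le_mul_of_nonneg_left step3 (Real.exp_pos _).le
    _ = Real.exp (-2 * t ^ 2 * n) := by
        rw [← Real.exp_add]
        congr 1
        simp only [hLdef]
        ring
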